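/- Let t > s and let y₁, …, y_N ∈ ℝ² be pairwise distinct and α₁, …, α_N : ℝ → ℝ continuously differentiable. Then for every pair (j,k), the function τ ↦ K_{jk}(t,τ) is Lebesgue integrable on (s, t), where K_{jj}(t,τ) := 4π I(t−τ) (α_j(τ) − (1/2π) log 2 + γ/(2π)) and, for j ≠ k, K_{jk}(t,τ) := −2i I(t−τ) · lim_{ε→0⁺} ∫ₛ^{τ−ε} U₀(τ−σ; |y_j − y_k|) dσ. -/

import Mathlib

set_option maxHeartbeats 1000000

open MeasureTheory Real Filter

/-- The Volterra function of order `-1`: `I(t) = ∫₀^∞ t^(σ-1)/Γ(σ) dσ`. -/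
noncomputable def volterraI (t : ℝ) : ℝ :=
  ∫ σ in Set.Ioi (0 : ℝ), t ^ (σ - 1) / Real.Gamma σ

/-- The integral kernel of the free two-dimensional Schrödinger propagator `e^{iΔt}`
at time `t` and distance `r`: `U₀(t; r) = e^{i r²/(4t)} / (2 i t)`. -/
noncomputable def U0 (t r : ℝ) : ℂ :=
  Complex.exp (Complex.I * r ^ 2 / (4 * t)) / (2 * Complex.I * t)

/-- The improper integral `lim_{ε→0⁺} ∫ₛ^{τ-ε} U₀(τ-σ; a) dσ`. -/
noncomputable def freeImproper (s τ a : ℝ) : ℂ :=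
  limUnder (nhdsWithin 0 (Set.Ioi 0)) (fun ε : ℝ => ∫ σ in s..(τ - ε), U0 (τ - σ) a)

/-- The matrix-valued kernel of the charge equation. -/
noncomputable def chargeKernel {N : ℕ} (y : Fin N → EuclideanSpace ℝ (Fin 2))
    (α : Fin N → ℝ → ℝ) (s t τ : ℝ) : Matrix (Fin N) (Fin N) ℂ :=
  fun j k =>
    if j = k then
      ((4 * Real.pi * volterraI (t - τ) *
        (α j τ - (1 / (2 * Real.pi)) * Real.log 2 +
          Real.eulerMascheroniConstant / (2 * Real.pi)) : ℝ) : ℂ)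
    else
      -2 * Complex.I * (volterraI (t - τ) : ℂ) * freeImproper s τ ‖y j - y k‖

section AuxLemmas

open Set

lemma gamma_lower {x A : ℝ} (hx : 1 ≤ x) (hA : 1 ≤ A) :
    A ^ (x - 1) * Real.exp (-A) ≤ Real.Gamma x := by
  have hx0 : 0 < x := lt_of_lt_of_le one_pos hx
  rw [Real.Gamma_eq_integral hx0]
  have hexp : IntegrableOn (fun t : ℝ => Real.exp (-t)) (Set.Ioi A) := by
    simpa using exp_neg_integrableOn_Ioi A one_pos
  have hint : IntegrableOn (fun t : ℝ => Real.exp (-t) * t ^ (x - 1)) (Set.Ioi 0) :=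
    Real.GammaIntegral_convergent hx0
  have hint' : IntegrableOn (fun t : ℝ => Real.exp (-t) * t ^ (x - 1)) (Set.Ioi A) :=
    hint.mono_set (Set.Ioi_subset_Ioi (by linarith))
  have h1 : A ^ (x - 1) * Real.exp (-A)
      = ∫ t in Set.Ioi A, Real.exp (-t) * A ^ (x - 1) := by
    rw [integral_mul_const, integral_exp_neg_Ioi, mul_comm]
  rw [h1]
  have h2 : (∫ t in Set.Ioi A, Real.exp (-t) * A ^ (x - 1))
      ≤ ∫ t in Set.Ioi A, Real.exp (-t) * t ^ (x - 1) := by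
    refine setIntegral_mono_on (hexp.mul_const _) hint' measurableSet_Ioi ?_
    intro u hu
    have hu' : A ≤ u := le_of_lt hu
    have : A ^ (x - 1) ≤ u ^ (x - 1) :=
      Real.rpow_le_rpow (by linarith) hu' (by linarith)
    exact mul_le_mul_of_nonneg_left this (Real.exp_nonneg _)
  refine h2.trans ?_
  refine setIntegral_mono_set hint ?_ ?_
  · filter_upwards [ae_restrict_mem measurableSet_Ioi] with u hu
    exact mul_nonneg (Real.exp_nonneg _) (Real.rpow_nonneg (le_of_lt hu) _)
  · exact HasSubset.Subset.eventuallyLE (Set.Ioi_subset_Ioi (by linarith))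

lemma volterraI_nonneg {u : ℝ} (hu : 0 < u) : 0 ≤ volterraI u :=
  setIntegral_nonneg measurableSet_Ioi fun σ hσ =>
    div_nonneg (Real.rpow_nonneg hu.le _) (Real.Gamma_pos_of_pos hσ).le

lemma volterraI_integrableOn {T : ℝ} (hT : 0 < T) :
    IntegrableOn volterraI (Set.Ioo 0 T) volume := by
  set A : ℝ := Real.exp 1 * max 1 T with hAdef
  have he1 : (1:ℝ) ≤ Real.exp 1 := by
    have := Real.add_one_le_exp (1:ℝ); linarith
  have hm1 : (1:ℝ) ≤ max 1 T := le_max_left _ _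
  have hA1 : 1 ≤ A := by nlinarith
  have hA0 : 0 < A := lt_of_lt_of_le one_pos hA1
  have hμ : True := trivial
  have hΓcont : ContinuousOn Real.Gamma (Set.Ioi 0) := by
    intro x hx
    refine (Real.differentiableAt_Gamma fun m => ?_).continuousAt.continuousWithinAt
    have : (0:ℝ) < x := hx
    intro h
    rw [h] at this
    have : (0:ℝ) < -(m:ℝ) := this
    have : (m:ℝ) < 0 := by linarith
    exact absurd this (not_lt.2 (by positivity))
  have hcontf : ContinuousOn (fun p : ℝ × ℝ => p.2 ^ (p.1 - 1) / Real.Gamma p.1) ((Set.Ioi (0:ℝ)) ×ˢ (Set.Ioo (0:ℝ) T)) := by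
    apply ContinuousOn.div
    · intro p hp
      have hp2 : (0:ℝ) < p.2 := hp.2.1
      have : ContinuousAt (fun q : ℝ × ℝ => q.1 ^ q.2) (p.2, p.1 - 1) :=
        Real.continuousAt_rpow (p.2, p.1 - 1) (Or.inl (ne_of_gt hp2))
      have h2 : ContinuousAt (fun x : ℝ × ℝ => (x.2, x.1 - 1)) p :=
        (continuous_snd.prodMk (continuous_fst.sub continuous_const)).continuousAt
      exact (ContinuousAt.comp (f := fun x : ℝ × ℝ => (x.2, x.1 - 1)) this h2).continuousWithinAt
    · exact hΓcont.comp continuous_fst.continuousOn fun p hp => hp.1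
    · intro p hp
      exact (Real.Gamma_pos_of_pos hp.1).ne'
  have hsm : AEStronglyMeasurable (fun p : ℝ × ℝ => p.2 ^ (p.1 - 1) / Real.Gamma p.1) ((volume.restrict (Set.Ioi (0:ℝ))).prod (volume.restrict (Set.Ioo (0:ℝ) T))) := by
    rw [Measure.prod_restrict]
    exact hcontf.aestronglyMeasurable (measurableSet_Ioi.prod measurableSet_Ioo)
  have key : Integrable (fun p : ℝ × ℝ => p.2 ^ (p.1 - 1) / Real.Gamma p.1) ((volume.restrict (Set.Ioi (0:ℝ))).prod (volume.restrict (Set.Ioo (0:ℝ) T))) := by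
    rw [MeasureTheory.integrable_prod_iff hsm]
    constructor
    · filter_upwards [ae_restrict_mem measurableSet_Ioi] with σ hσ
      have hσ0 : (0:ℝ) < σ := hσ
      have h1 : IntegrableOn (fun u : ℝ => u ^ (σ - 1)) (Set.Ioo 0 T) := by
        have := intervalIntegral.intervalIntegrable_rpow' (a := 0) (b := T)
          (show (-1:ℝ) < σ - 1 by linarith)
        rw [intervalIntegrable_iff_integrableOn_Ioo_of_le hT.le] at this
        exact this
      exact (h1.div_const _)
    · have hcomp : ∀ σ ∈ Set.Ioi (0:ℝ),
          (∫ u, ‖(σ, u).2 ^ ((σ, u).1 - 1) / Real.Gamma (σ, u).1‖ ∂(volume.restrict (Set.Ioo (0:ℝ) T))) = T ^ σ / Real.Gamma (σ + 1) := by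
        intro σ hσ
        have hσ0 : (0:ℝ) < σ := hσ
        have e1 : (∫ u, ‖(σ, u).2 ^ ((σ, u).1 - 1) / Real.Gamma (σ, u).1‖ ∂(volume.restrict (Set.Ioo (0:ℝ) T))) = ∫ u in Set.Ioo (0:ℝ) T, u ^ (σ - 1) / Real.Gamma σ := by
          refine setIntegral_congr_fun measurableSet_Ioo ?_
          intro u hu
          have : 0 ≤ u ^ (σ - 1) / Real.Gamma σ :=
            div_nonneg (Real.rpow_nonneg hu.1.le _) (Real.Gamma_pos_of_pos hσ0).le
          simp only [Real.norm_eq_abs, abs_div]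
          rw [abs_of_nonneg (Real.rpow_nonneg hu.1.le _),
            abs_of_nonneg (Real.Gamma_pos_of_pos hσ0).le]
        have e2 : (∫ u in Set.Ioo (0:ℝ) T, u ^ (σ - 1)) = T ^ σ / σ := by
          rw [← MeasureTheory.integral_Ioc_eq_integral_Ioo,
            ← intervalIntegral.integral_of_le hT.le,
            integral_rpow (Or.inl (by linarith : (-1:ℝ) < σ - 1))]
          rw [Real.zero_rpow (by linarith : σ - 1 + 1 ≠ 0)]
          have hs : σ - 1 + 1 = σ := by ring
          rw [hs, sub_zero]
        rw [e1, integral_div, e2, Real.Gamma_add_one (ne_of_gt hσ0), div_div]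
      apply Integrable.mono' (g := fun σ => Real.exp A * Real.exp (-σ))
      · have h0 : IntegrableOn (fun σ : ℝ => Real.exp (-σ)) (Set.Ioi 0) := by
          simpa using exp_neg_integrableOn_Ioi (0:ℝ) one_pos
        exact h0.const_mul _
      · exact hsm.norm.integral_prod_right'
      · filter_upwards [ae_restrict_mem measurableSet_Ioi] with σ hσ
        have hσ0 : (0:ℝ) < σ := hσ
        rw [Real.norm_eq_abs, abs_of_nonneg (integral_nonneg fun u => norm_nonneg _), hcomp σ hσ]
        have hΓ : A ^ σ * Real.exp (-A) ≤ Real.Gamma (σ + 1) := by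
          have := gamma_lower (x := σ + 1) (A := A) (by linarith) hA1
          simpa using this
        have hΓpos : (0:ℝ) < A ^ σ * Real.exp (-A) :=
          mul_pos (Real.rpow_pos_of_pos hA0 _) (Real.exp_pos _)
        have step1 : T ^ σ / Real.Gamma (σ + 1) ≤ T ^ σ / (A ^ σ * Real.exp (-A)) := by
          apply div_le_div_of_nonneg_left (Real.rpow_nonneg hT.le _) hΓpos hΓ
        refine step1.trans ?_
        have hTA : T / A ≤ Real.exp (-1) := by
          rw [div_le_iff₀ hA0, hAdef]
          have h1 : Real.exp (-1) * Real.exp 1 = 1 := by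
            rw [← Real.exp_add]; norm_num
          have hTm : T ≤ max 1 T := le_max_right _ _
          calc T ≤ max 1 T := hTm
          _ = 1 * max 1 T := (one_mul _).symm
          _ = Real.exp (-1) * Real.exp 1 * max 1 T := by rw [h1]
          _ = Real.exp (-1) * (Real.exp 1 * max 1 T) := by ring
        have hstep2 : T ^ σ / (A ^ σ * Real.exp (-A)) = Real.exp A * (T / A) ^ σ := by
          rw [Real.div_rpow hT.le hA0.le, Real.exp_neg]
          field_simp
        rw [hstep2]
        have : (T / A) ^ σ ≤ Real.exp (-σ) := by
          calc (T / A) ^ σ ≤ (Real.exp (-1)) ^ σ :=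
            Real.rpow_le_rpow (div_nonneg hT.le hA0.le) hTA hσ0.le
          _ = Real.exp (-σ) := by
            rw [Real.exp_neg, Real.inv_rpow (Real.exp_pos 1).le, Real.exp_one_rpow,
              ← Real.exp_neg]
        exact mul_le_mul_of_nonneg_left this (Real.exp_pos _).le
  have h := key.integral_prod_right
  exact h

lemma volterraI_comp_integrable {s t : ℝ} (hst : s < t) :
    IntegrableOn (fun τ => volterraI (t - τ)) (Set.Ioo s t) volume := by
  have h1 : IntervalIntegrable volterraI volume 0 (t - s) := by
    rw [intervalIntegrable_iff_integrableOn_Ioo_of_le (by linarith)]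
    exact volterraI_integrableOn (by linarith)
  have h2 := (h1.comp_sub_left t).symm
  simp only [sub_zero, sub_sub_cancel] at h2
  rw [intervalIntegrable_iff_integrableOn_Ioo_of_le hst.le] at h2
  exact h2

noncomputable def eKer (a u : ℝ) : ℂ := Complex.exp (Complex.I * a ^ 2 / (4 * u))

noncomputable def phiK (a u : ℝ) : ℂ := (u : ℂ) * eKer a u

lemma eKer_eq (a u : ℝ) : eKer a u = Complex.exp (((a ^ 2 / (4 * u) : ℝ) : ℂ) * Complex.I) := by
  unfold eKer
  congr 1
  push_cast
  ring

lemma eKer_norm (a u : ℝ) : ‖eKer a u‖ = 1 := by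
  rw [eKer_eq, Complex.norm_exp_ofReal_mul_I]

lemma eKer_measurable (a : ℝ) : Measurable (eKer a) := by
  have : eKer a = fun u => Complex.exp (((a ^ 2 / (4 * u) : ℝ) : ℂ) * Complex.I) :=
    funext fun u => eKer_eq a u
  rw [this]
  exact Complex.measurable_exp.comp
    ((Complex.measurable_ofReal.comp (measurable_const.div (measurable_id.const_mul 4))).mul_const _)

lemma eKer_intervalIntegrable (a c d : ℝ) : IntervalIntegrable (eKer a) volume c d := by
  rw [intervalIntegrable_iff]
  apply Integrable.mono' (g := fun _ => (1:ℝ))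
  · exact integrableOn_const measure_Ioc_lt_top.ne
  · exact ((eKer_measurable a).aestronglyMeasurable).restrict
  · exact ae_of_all _ fun u => le_of_eq (eKer_norm a u)

lemma eKer_continuousAt (a : ℝ) {u : ℝ} (hu : u ≠ 0) : ContinuousAt (eKer a) u := by
  have h4u : ContinuousAt (fun v : ℝ => (4 * (v : ℂ))) u := by fun_prop
  have hdiv : ContinuousAt (fun v : ℝ => Complex.I * (a : ℂ) ^ 2 / (4 * (v : ℂ))) u := by
    apply ContinuousAt.div continuousAt_const h4u
    simp [hu]
  exact Complex.continuous_exp.continuousAt.comp hdiv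

lemma phiK_norm (a u : ℝ) : ‖phiK a u‖ = |u| := by
  rw [phiK, norm_mul, eKer_norm, mul_one, Complex.norm_real, Real.norm_eq_abs]

lemma phiK_hasDerivAt (a : ℝ) {u : ℝ} (hu : u ≠ 0) :
    HasDerivAt (phiK a) (eKer a u * (1 - Complex.I * (a:ℂ) ^ 2 / (4 * (u:ℂ)))) u := by
  have hu' : (u : ℂ) ≠ 0 := Complex.ofReal_ne_zero.2 hu
  have hinv : HasDerivAt (fun z : ℂ => Complex.I * (a:ℂ) ^ 2 / (4 * z))
      (Complex.I * (a:ℂ) ^ 2 / 4 * (-((u:ℂ) ^ 2)⁻¹)) (u : ℂ) := by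
    have h1 : HasDerivAt (fun z : ℂ => z⁻¹) (-((u:ℂ) ^ 2)⁻¹) (u : ℂ) := hasDerivAt_inv hu'
    have h2 : HasDerivAt (fun y : ℂ => Complex.I * (a:ℂ) ^ 2 / 4 * y⁻¹)
        (Complex.I * (a:ℂ) ^ 2 / 4 * (-((u:ℂ) ^ 2)⁻¹)) (u : ℂ) :=
      h1.const_mul (Complex.I * (a:ℂ) ^ 2 / 4)
    convert h2 using 2 with z
    · ring
  have hexp : HasDerivAt (fun z : ℂ => Complex.exp (Complex.I * (a:ℂ) ^ 2 / (4 * z)))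
      (Complex.exp (Complex.I * (a:ℂ) ^ 2 / (4 * (u:ℂ))) *
        (Complex.I * (a:ℂ) ^ 2 / 4 * (-((u:ℂ) ^ 2)⁻¹))) (u : ℂ) := hinv.cexp
  have hmul : HasDerivAt (fun z : ℂ => z * Complex.exp (Complex.I * (a:ℂ) ^ 2 / (4 * z)))
      (1 * Complex.exp (Complex.I * (a:ℂ) ^ 2 / (4 * (u:ℂ))) +
        (u:ℂ) * (Complex.exp (Complex.I * (a:ℂ) ^ 2 / (4 * (u:ℂ))) *
          (Complex.I * (a:ℂ) ^ 2 / 4 * (-((u:ℂ) ^ 2)⁻¹)))) (u : ℂ) :=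
    (hasDerivAt_id _).mul hexp
  have := hmul.comp_ofReal
  convert this using 1
  · funext y; rfl
  rw [eKer]
  field_simp
  ring

lemma U0_eq {a : ℝ} (ha : a ≠ 0) {u : ℝ} (hu : u ≠ 0) :
    U0 u a = (-2 / (a:ℂ) ^ 2) *
      (eKer a u - eKer a u * (1 - Complex.I * (a:ℂ) ^ 2 / (4 * (u:ℂ)))) := by
  have ha' : (a : ℂ) ≠ 0 := Complex.ofReal_ne_zero.2 ha
  have hu' : (u : ℂ) ≠ 0 := Complex.ofReal_ne_zero.2 hu
  rw [U0, eKer]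
  have hI : Complex.I ≠ 0 := Complex.I_ne_zero
  field_simp
  ring_nf
  rw [Complex.I_sq]
  ring

noncomputable def PhiF (s a τ : ℝ) : ℂ :=
  (-2 / (a:ℂ) ^ 2) * ((∫ u in (0:ℝ)..(τ - s), eKer a u) - phiK a (τ - s))

lemma freeImproper_eq {s τ : ℝ} (h : s < τ) {a : ℝ} (ha : a ≠ 0) :
    freeImproper s τ a = PhiF s a τ := by
  apply Filter.Tendsto.limUnder_eq
  have hev : ∀ᶠ ε in nhdsWithin (0:ℝ) (Set.Ioi 0), ε ∈ Set.Ioo (0:ℝ) (τ - s) :=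
    Ioo_mem_nhdsGT_of_mem ⟨le_refl _, by linarith⟩
  have heq : ∀ ε ∈ Set.Ioo (0:ℝ) (τ - s),
      (∫ σ in s..(τ - ε), U0 (τ - σ) a) =
        (-2 / (a:ℂ) ^ 2) * (((∫ u in (0:ℝ)..(τ - s), eKer a u) - ∫ u in (0:ℝ)..ε, eKer a u)
          - (phiK a (τ - s) - phiK a ε)) := by
    intro ε hε
    have h1 : (∫ σ in s..(τ - ε), U0 (τ - σ) a) = ∫ u in ε..(τ - s), U0 u a := by
      rw [intervalIntegral.integral_comp_sub_left (fun u => U0 u a) τ]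
      simp only [sub_sub_cancel]
    have hsub : Set.uIcc ε (τ - s) ⊆ Set.Ioi (0:ℝ) := by
      rw [Set.uIcc_of_le hε.2.le]
      intro x hx
      exact lt_of_lt_of_le hε.1 hx.1
    have hcont : ContinuousOn
        (fun u : ℝ => eKer a u * (1 - Complex.I * (a:ℂ) ^ 2 / (4 * (u:ℂ))))
        (Set.uIcc ε (τ - s)) := by
      intro x hx
      have hx0 : x ≠ 0 := ne_of_gt (hsub hx)
      apply ContinuousAt.continuousWithinAt
      apply ((eKer_continuousAt a hx0).mul)
      apply ContinuousAt.sub continuousAt_const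
      apply ContinuousAt.div continuousAt_const (by fun_prop)
      simp [hx0]
    have h2 : (∫ u in ε..(τ - s), U0 u a) =
        ∫ u in ε..(τ - s), (-2 / (a:ℂ) ^ 2) *
          (eKer a u - eKer a u * (1 - Complex.I * (a:ℂ) ^ 2 / (4 * (u:ℂ)))) :=
      intervalIntegral.integral_congr fun u hu => U0_eq ha (ne_of_gt (hsub hu))
    have hFTC : (∫ u in ε..(τ - s),
        eKer a u * (1 - Complex.I * (a:ℂ) ^ 2 / (4 * (u:ℂ)))) = phiK a (τ - s) - phiK a ε :=
      intervalIntegral.integral_eq_sub_of_hasDerivAt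
        (fun u hu => phiK_hasDerivAt a (ne_of_gt (hsub hu)))
        (hcont.intervalIntegrable)
    have hsplit : (∫ u in ε..(τ - s), eKer a u) =
        (∫ u in (0:ℝ)..(τ - s), eKer a u) - ∫ u in (0:ℝ)..ε, eKer a u :=
      (intervalIntegral.integral_interval_sub_left
        (eKer_intervalIntegrable a 0 (τ - s)) (eKer_intervalIntegrable a 0 ε)).symm
    rw [h1, h2, intervalIntegral.integral_const_mul,
      intervalIntegral.integral_sub (eKer_intervalIntegrable a ε (τ - s))
        hcont.intervalIntegrable, hFTC, hsplit]
  have habs : Tendsto (fun ε : ℝ => |ε|) (nhdsWithin (0:ℝ) (Set.Ioi 0)) (nhds 0) := by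
    have := (continuous_abs.tendsto (0:ℝ)).mono_left (nhdsWithin_le_nhds (s := Set.Ioi 0))
    simpa using this
  have t1 : Tendsto (fun ε : ℝ => ∫ u in (0:ℝ)..ε, eKer a u)
      (nhdsWithin (0:ℝ) (Set.Ioi 0)) (nhds 0) := by
    apply squeeze_zero_norm _ habs
    intro ε
    have := intervalIntegral.norm_integral_le_of_norm_le_const
      (C := 1) (f := eKer a) (a := (0:ℝ)) (b := ε)
      (fun x _ => le_of_eq (eKer_norm a x))
    simpa using this
  have t2 : Tendsto (fun ε : ℝ => phiK a ε) (nhdsWithin (0:ℝ) (Set.Ioi 0)) (nhds 0) := by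
    apply squeeze_zero_norm _ habs
    intro ε
    exact le_of_eq (phiK_norm a ε)
  have tall : Tendsto (fun ε : ℝ =>
      (-2 / (a:ℂ) ^ 2) * (((∫ u in (0:ℝ)..(τ - s), eKer a u) - ∫ u in (0:ℝ)..ε, eKer a u)
        - (phiK a (τ - s) - phiK a ε)))
      (nhdsWithin (0:ℝ) (Set.Ioi 0)) (nhds (PhiF s a τ)) := by
    have : Tendsto (fun ε : ℝ =>
        ((∫ u in (0:ℝ)..(τ - s), eKer a u) - ∫ u in (0:ℝ)..ε, eKer a u)
          - (phiK a (τ - s) - phiK a ε))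
        (nhdsWithin (0:ℝ) (Set.Ioi 0))
        (nhds (((∫ u in (0:ℝ)..(τ - s), eKer a u) - 0) - (phiK a (τ - s) - 0))) :=
      ((tendsto_const_nhds.sub t1).sub (tendsto_const_nhds.sub t2))
    have h3 := this.const_mul (-2 / (a:ℂ) ^ 2)
    simpa [PhiF] using h3
  exact tall.congr' (hev.mono fun ε hε => (heq ε hε).symm)

lemma PhiF_norm_le {s τ : ℝ} (h : s ≤ τ) (a : ℝ) :
    ‖PhiF s a τ‖ ≤ 2 / a ^ 2 * (2 * (τ - s)) := by
  rw [PhiF, norm_mul]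
  have h1 : ‖(-2 / (a:ℂ) ^ 2 : ℂ)‖ = 2 / a ^ 2 := by
    rw [norm_div, norm_neg, norm_pow, Complex.norm_real]
    simp [sq_abs]
  rw [h1]
  apply mul_le_mul_of_nonneg_left _ (by positivity)
  have h2 : ‖∫ u in (0:ℝ)..(τ - s), eKer a u‖ ≤ τ - s := by
    have := intervalIntegral.norm_integral_le_of_norm_le_const
      (C := 1) (f := eKer a) (a := (0:ℝ)) (b := τ - s)
      (fun x _ => le_of_eq (eKer_norm a x))
    rw [one_mul, sub_zero, abs_of_nonneg (by linarith)] at this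
    exact this
  have h3 : ‖phiK a (τ - s)‖ = τ - s := by
    rw [phiK_norm, abs_of_nonneg (by linarith)]
  calc ‖(∫ u in (0:ℝ)..(τ - s), eKer a u) - phiK a (τ - s)‖
      ≤ ‖∫ u in (0:ℝ)..(τ - s), eKer a u‖ + ‖phiK a (τ - s)‖ := norm_sub_le _ _
  _ ≤ (τ - s) + (τ - s) := by rw [h3]; linarith
  _ = 2 * (τ - s) := by ring

lemma PhiF_continuousOn (s a : ℝ) : ContinuousOn (PhiF s a) (Set.Ioi s) := by
  unfold PhiF
  apply ContinuousOn.mul continuousOn_const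
  apply ContinuousOn.sub
  · have hJ : Continuous fun x : ℝ => ∫ u in (0:ℝ)..x, eKer a u :=
      intervalIntegral.continuous_primitive (fun c d => eKer_intervalIntegrable a c d) 0
    exact (hJ.comp (continuous_sub_right s)).continuousOn
  · intro τ hτ
    have hτ0 : τ - s ≠ 0 := by
      have : s < τ := hτ
      intro hP
      exact absurd (by linarith : τ = s) (by intro q; linarith)
    have hc : ContinuousAt (phiK a) (τ - s) := by
      apply ContinuousAt.mul (by fun_prop) (eKer_continuousAt a hτ0)
    have hsub : ContinuousAt (fun τ : ℝ => τ - s) τ := by fun_prop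
    exact (ContinuousAt.comp (f := fun τ : ℝ => τ - s) hc hsub).continuousWithinAt

end AuxLemmas

/-- For `t > s` and pairwise distinct centers, each entry `τ ↦ K_{jk}(t,τ)` of the
charge-equation kernel is Lebesgue integrable on `(s,t)`. -/
theorem chargeKernel_integrableOn
    {N : ℕ} (y : Fin N → EuclideanSpace ℝ (Fin 2))
    (hy : Function.Injective y) (α : Fin N → ℝ → ℝ)
    (hα : ∀ j, ContDiff ℝ 1 (α j)) (s t : ℝ) (hst : s < t) (j k : Fin N) :
    IntegrableOn (fun τ => chargeKernel y α s t τ j k) (Set.Ioo s t) volume := by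
  have hvol := volterraI_comp_integrable hst
  by_cases hjk : j = k
  · subst hjk
    set F : ℝ → ℝ := fun τ => α j τ - (1 / (2 * Real.pi)) * Real.log 2 +
        Real.eulerMascheroniConstant / (2 * Real.pi) with hFdef
    have hF : Continuous F := ((hα j).continuous.sub continuous_const).add continuous_const
    obtain ⟨B, hB⟩ :=
      (isCompact_Icc (a := s) (b := t)).exists_bound_of_continuousOn hF.continuousOn
    have hrw : (fun τ => chargeKernel y α s t τ j j) =
        fun τ => ((4 * Real.pi * volterraI (t - τ) * F τ : ℝ) : ℂ) := by
      funext τ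
      simp [chargeKernel, hFdef]
    rw [hrw]
    apply Integrable.mono' (g := fun τ => 4 * Real.pi * B * volterraI (t - τ))
    · exact hvol.const_mul _
    · apply Complex.continuous_ofReal.comp_aestronglyMeasurable
      exact (hvol.aestronglyMeasurable.const_mul _).mul hF.aestronglyMeasurable.restrict
    · filter_upwards [ae_restrict_mem measurableSet_Ioo] with τ hτ
      have hv0 : 0 ≤ volterraI (t - τ) := volterraI_nonneg (by linarith [hτ.2] : 0 < t - τ)
      have hBτ : |F τ| ≤ B := by
        have := hB τ (Set.Ioo_subset_Icc_self hτ)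
        simpa [Real.norm_eq_abs] using this
      have hB0 : 0 ≤ B := le_trans (abs_nonneg _) hBτ
      have hπ := Real.pi_pos
      calc ‖((4 * Real.pi * volterraI (t - τ) * F τ : ℝ) : ℂ)‖
          = |4 * Real.pi * volterraI (t - τ)| * |F τ| := by
            rw [Complex.norm_real, Real.norm_eq_abs, abs_mul]
        _ = 4 * Real.pi * volterraI (t - τ) * |F τ| := by
            rw [abs_of_nonneg (by positivity)]
        _ ≤ 4 * Real.pi * volterraI (t - τ) * B := by
            apply mul_le_mul_of_nonneg_left hBτ (by positivity)
        _ = 4 * Real.pi * B * volterraI (t - τ) := by ring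
  · set a : ℝ := ‖y j - y k‖ with hadef
    have ha : a ≠ 0 := by
      rw [hadef, norm_ne_zero_iff, sub_ne_zero]
      exact fun h => hjk (hy h)
    have hEq : Set.EqOn (fun τ => -2 * Complex.I * (volterraI (t - τ) : ℂ) * PhiF s a τ)
        (fun τ => chargeKernel y α s t τ j k) (Set.Ioo s t) := by
      intro τ hτ
      simp only [chargeKernel, if_neg hjk]
      rw [freeImproper_eq hτ.1 ha]
    refine IntegrableOn.congr_fun ?_ hEq measurableSet_Ioo
    apply Integrable.mono' (g := fun τ => 2 * (2 / a ^ 2 * (2 * (t - s))) * volterraI (t - τ))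
    · exact hvol.const_mul _
    · apply AEStronglyMeasurable.mul
      · exact (Complex.continuous_ofReal.comp_aestronglyMeasurable
          hvol.aestronglyMeasurable).const_mul _
      · exact ((PhiF_continuousOn s a).mono Set.Ioo_subset_Ioi_self).aestronglyMeasurable
          measurableSet_Ioo
    · filter_upwards [ae_restrict_mem measurableSet_Ioo] with τ hτ
      have hv0 : 0 ≤ volterraI (t - τ) := volterraI_nonneg (by linarith [hτ.2] : 0 < t - τ)
      have hPhi : ‖PhiF s a τ‖ ≤ 2 / a ^ 2 * (2 * (τ - s)) := PhiF_norm_le hτ.1.le a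
      have hPhi' : ‖PhiF s a τ‖ ≤ 2 / a ^ 2 * (2 * (t - s)) := by
        refine hPhi.trans ?_
        apply mul_le_mul_of_nonneg_left (by linarith [hτ.2]) (by positivity)
      have hnI : ‖(-2 * Complex.I : ℂ)‖ = 2 := by
        simp
      calc ‖-2 * Complex.I * (volterraI (t - τ) : ℂ) * PhiF s a τ‖
          = ‖(-2 * Complex.I : ℂ)‖ * ‖((volterraI (t - τ) : ℝ) : ℂ)‖ * ‖PhiF s a τ‖ := by
            rw [norm_mul, norm_mul]
        _ = 2 * volterraI (t - τ) * ‖PhiF s a τ‖ := by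
            rw [hnI, Complex.norm_real, Real.norm_eq_abs, abs_of_nonneg hv0]
        _ ≤ 2 * volterraI (t - τ) * (2 / a ^ 2 * (2 * (t - s))) := by
            apply mul_le_mul_of_nonneg_left hPhi' (by positivity)
        _ = 2 * (2 / a ^ 2 * (2 * (t - s))) * volterraI (t - τ) := by ring
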